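/- Let D ⊆ ℂ^N be a domain, μ₁ an admissible weight on D, U a bounded open set with closure contained in D on which μ₁ is integrable, and μ₂ any weight on U. Define μ̃₁(z) = max(μ₁(z), μ₂(z)) for z ∈ U and μ̃₁(z) = μ₁(z) for z ∈ D \ U. Then μ̃₁ is an admissible weight, L²_H(D,μ̃₁) ⊆ L²_H(D,μ₁), and the inclusion is continuous. -/

import Mathlib

open MeasureTheory Filter
open scoped Classical

/-- Lebesgue measure on `ℂ^N` (transported to `EuclideanSpace ℂ (Fin N)` via the
defeq with `Fin N → ℂ`). -/
noncomputable instance {N : ℕ} : MeasureSpace (EuclideanSpace ℂ (Fin N)) :=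
  { volume := Measure.map (WithLp.toLp 2) (volume : Measure (Fin N → ℂ)) }

/-- The weighted L² norm `‖f‖_μ = (∫_D |f|² μ)^{1/2}` on a domain `D ⊆ ℂ^N`. -/
noncomputable def wnorm {N : ℕ} (D : Set (EuclideanSpace ℂ (Fin N)))
    (μ : EuclideanSpace ℂ (Fin N) → ℝ) (f : EuclideanSpace ℂ (Fin N) → ℂ) : ℝ :=
  Real.sqrt (∫ z in D, ‖f z‖ ^ 2 * μ z)

/-- `L²_H(D,μ)`: holomorphic functions on `D` that are square-integrable against `μ`. -/
def L2H {N : ℕ} (D : Set (EuclideanSpace ℂ (Fin N)))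
    (μ : EuclideanSpace ℂ (Fin N) → ℝ) : Set (EuclideanSpace ℂ (Fin N) → ℂ) :=
  {f | DifferentiableOn ℂ f D ∧ IntegrableOn (fun z => ‖f z‖ ^ 2 * μ z) D}

/-- Every point evaluation `E_z : f ↦ f(z)` is continuous on `L²_H(D,μ)`. -/
def EvalContinuous {N : ℕ} (D : Set (EuclideanSpace ℂ (Fin N)))
    (μ : EuclideanSpace ℂ (Fin N) → ℝ) : Prop :=
  ∀ z ∈ D, ∃ C : ℝ, ∀ f ∈ L2H D μ, ‖f z‖ ≤ C * wnorm D μ f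

/-- `L²_H(D,μ)` is closed in `L²(D,μ)`: any `g ∈ L²(D,μ)` that is a norm-limit of a sequence
from `L²_H(D,μ)` agrees a.e. on `D` with a member of `L²_H(D,μ)`. -/
def ClosedInL2 {N : ℕ} (D : Set (EuclideanSpace ℂ (Fin N)))
    (μ : EuclideanSpace ℂ (Fin N) → ℝ) : Prop :=
  ∀ F : ℕ → (EuclideanSpace ℂ (Fin N) → ℂ), (∀ n, F n ∈ L2H D μ) →
    ∀ g : EuclideanSpace ℂ (Fin N) → ℂ,
      IntegrableOn (fun z => ‖g z‖ ^ 2 * μ z) D →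
      Tendsto (fun n => wnorm D μ (fun z => F n z - g z)) atTop (nhds 0) →
      ∃ g' ∈ L2H D μ, ∀ᵐ z ∂(volume.restrict D), g z = g' z

/-- An admissible weight: positive and measurable, point evaluations are continuous on
`L²_H(D,μ)`, and `L²_H(D,μ)` is closed in `L²(D,μ)`. -/
def Admissible {N : ℕ} (D : Set (EuclideanSpace ℂ (Fin N)))
    (μ : EuclideanSpace ℂ (Fin N) → ℝ) : Prop :=
  Measurable μ ∧ (∀ z ∈ D, 0 < μ z) ∧ EvalContinuous D μ ∧ ClosedInL2 D μ

noncomputable instance {N : ℕ} : BorelSpace (EuclideanSpace ℂ (Fin N)) :=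
  inferInstance

/-- modifying an admissible weight by taking a max with another weight on a
bounded open set `U` (with `closure U ⊆ D`) on which `μ₁` is integrable yields an admissible
weight `μ̃₁` with `L²_H(D,μ̃₁) ⊆ L²_H(D,μ₁)` and continuous inclusion. -/
theorem max_weight_admissible {N : ℕ} (D U : Set (EuclideanSpace ℂ (Fin N)))
    (hD : IsOpen D) (hDconn : IsConnected D)
    (μ₁ μ₂ : EuclideanSpace ℂ (Fin N) → ℝ)
    (hμ₁ : Admissible D μ₁)
    (hμ₂meas : Measurable μ₂) (hμ₂pos : ∀ z ∈ U, 0 < μ₂ z)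
    (hU : IsOpen U) (hUbdd : Bornology.IsBounded U) (hUcl : closure U ⊆ D)
    (hμ₁int : IntegrableOn μ₁ U) :
    Admissible D (fun z => if z ∈ U then max (μ₁ z) (μ₂ z) else μ₁ z) ∧
    L2H D (fun z => if z ∈ U then max (μ₁ z) (μ₂ z) else μ₁ z) ⊆ L2H D μ₁ ∧
    ∃ C : ℝ, 0 < C ∧ ∀ f ∈ L2H D (fun z => if z ∈ U then max (μ₁ z) (μ₂ z) else μ₁ z),
      wnorm D μ₁ f ≤ C * wnorm D (fun z => if z ∈ U then max (μ₁ z) (μ₂ z) else μ₁ z) f := by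
  classical
  obtain ⟨hμ₁meas, hμ₁pos, hμ₁eval, hμ₁closed⟩ := hμ₁
  set μt : EuclideanSpace ℂ (Fin N) → ℝ :=
    fun z => if z ∈ U then max (μ₁ z) (μ₂ z) else μ₁ z with hμt
  have hDm : MeasurableSet D := hD.measurableSet
  have hUm : MeasurableSet U := hU.measurableSet
  have hμtmeas : Measurable μt :=
    Measurable.ite hUm (hμ₁meas.max hμ₂meas) hμ₁meas
  have hμtpos : ∀ z ∈ D, 0 < μt z := by
    intro z hz
    by_cases h : z ∈ U
    · simp only [hμt, if_pos h]
      exact lt_max_of_lt_left (hμ₁pos z hz)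
    · simp only [hμt, if_neg h]
      exact hμ₁pos z hz
  have hle : ∀ z, μ₁ z ≤ μt z := by
    intro z
    by_cases h : z ∈ U
    · simp only [hμt, if_pos h]; exact le_max_left _ _
    · simp only [hμt, if_neg h]; exact le_refl _
  -- pointwise comparison of integrands on D
  have hptle : ∀ h : EuclideanSpace ℂ (Fin N) → ℂ, ∀ z,
      ‖h z‖ ^ 2 * μ₁ z ≤ ‖h z‖ ^ 2 * μt z := by
    intro h z
    exact mul_le_mul_of_nonneg_left (hle z) (sq_nonneg _)
  -- if the μt-integrand is AE strongly measurable, so is the μ₁-integrand, and conversely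
  have hAESM₁ : ∀ h : EuclideanSpace ℂ (Fin N) → ℂ,
      AEStronglyMeasurable (fun z => ‖h z‖ ^ 2 * μt z) (volume.restrict D) →
      AEStronglyMeasurable (fun z => ‖h z‖ ^ 2 * μ₁ z) (volume.restrict D) := by
    intro h hB
    have hprod : AEStronglyMeasurable
        (fun z => (‖h z‖ ^ 2 * μt z) * (μ₁ z / μt z)) (volume.restrict D) :=
      hB.mul ((hμ₁meas.div hμtmeas).aestronglyMeasurable.restrict)
    refine hprod.congr ?_
    filter_upwards [ae_restrict_mem hDm] with z hz
    have hne : μt z ≠ 0 := ne_of_gt (hμtpos z hz)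
    field_simp
  have hAESM₂ : ∀ h : EuclideanSpace ℂ (Fin N) → ℂ,
      AEStronglyMeasurable (fun z => ‖h z‖ ^ 2 * μ₁ z) (volume.restrict D) →
      AEStronglyMeasurable (fun z => ‖h z‖ ^ 2 * μt z) (volume.restrict D) := by
    intro h hA
    have hprod : AEStronglyMeasurable
        (fun z => (‖h z‖ ^ 2 * μ₁ z) * (μt z / μ₁ z)) (volume.restrict D) :=
      hA.mul ((hμtmeas.div hμ₁meas).aestronglyMeasurable.restrict)
    refine hprod.congr ?_
    filter_upwards [ae_restrict_mem hDm] with z hz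
    have hne : μ₁ z ≠ 0 := ne_of_gt (hμ₁pos z hz)
    field_simp
  -- key: integrability transfers downward, and the norms compare
  have key : ∀ h : EuclideanSpace ℂ (Fin N) → ℂ,
      IntegrableOn (fun z => ‖h z‖ ^ 2 * μt z) D →
      IntegrableOn (fun z => ‖h z‖ ^ 2 * μ₁ z) D ∧ wnorm D μ₁ h ≤ wnorm D μt h := by
    intro h hB
    have hA : IntegrableOn (fun z => ‖h z‖ ^ 2 * μ₁ z) D := by
      refine hB.mono' (hAESM₁ h hB.aestronglyMeasurable) ?_
      filter_upwards [ae_restrict_mem hDm] with z hz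
      have h0 : 0 ≤ ‖h z‖ ^ 2 * μ₁ z := mul_nonneg (sq_nonneg _) (hμ₁pos z hz).le
      rw [Real.norm_eq_abs, abs_of_nonneg h0]
      exact hptle h z
    refine ⟨hA, Real.sqrt_le_sqrt ?_⟩
    exact setIntegral_mono_on hA hB hDm (fun z _ => hptle h z)
  -- the inclusion L2H μt ⊆ L2H μ₁
  have hincl : L2H D μt ⊆ L2H D μ₁ := by
    intro f hf
    exact ⟨hf.1, (key f hf.2).1⟩
  -- wnorm comparison in the non-measurable case
  have hzero : ∀ h : EuclideanSpace ℂ (Fin N) → ℂ,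
      ¬ AEStronglyMeasurable (fun z => ‖h z‖ ^ 2 * μt z) (volume.restrict D) →
      wnorm D μ₁ h = 0 := by
    intro h hB
    have hnA : ¬ Integrable (fun z => ‖h z‖ ^ 2 * μ₁ z) (volume.restrict D) := by
      intro hi
      exact hB (hAESM₂ h hi.aestronglyMeasurable)
    simp only [wnorm]
    rw [integral_undef hnA, Real.sqrt_zero]
  refine ⟨⟨hμtmeas, hμtpos, ?_, ?_⟩, hincl, 1, one_pos, ?_⟩
  · -- EvalContinuous
    intro z hz
    obtain ⟨C, hC⟩ := hμ₁eval z hz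
    refine ⟨max C 0, fun f hf => ?_⟩
    have h1 : ‖f z‖ ≤ C * wnorm D μ₁ f := hC f (hincl hf)
    have h2 : wnorm D μ₁ f ≤ wnorm D μt f := (key f hf.2).2
    have h3 : C * wnorm D μ₁ f ≤ max C 0 * wnorm D μ₁ f :=
      mul_le_mul_of_nonneg_right (le_max_left _ _) (Real.sqrt_nonneg _)
    calc ‖f z‖ ≤ C * wnorm D μ₁ f := h1
      _ ≤ max C 0 * wnorm D μ₁ f := h3
      _ ≤ max C 0 * wnorm D μt f :=
        mul_le_mul_of_nonneg_left h2 (le_max_right _ _)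
  · -- ClosedInL2
    intro F hF g hg htend
    have hF₁ : ∀ n, F n ∈ L2H D μ₁ := fun n => hincl (hF n)
    have hg₁ : IntegrableOn (fun z => ‖g z‖ ^ 2 * μ₁ z) D := by
      have hA : AEStronglyMeasurable (fun z => ‖g z‖ ^ 2 * μ₁ z) (volume.restrict D) :=
        hAESM₁ g hg.aestronglyMeasurable
      refine hg.mono' hA ?_
      filter_upwards [ae_restrict_mem hDm] with z hz
      have h0 : 0 ≤ ‖g z‖ ^ 2 * μ₁ z := mul_nonneg (sq_nonneg _) (hμ₁pos z hz).le
      rw [Real.norm_eq_abs, abs_of_nonneg h0]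
      exact hptle g z
    have hcomp : ∀ n, wnorm D μ₁ (fun z => F n z - g z) ≤
        wnorm D μt (fun z => F n z - g z) := by
      intro n
      by_cases hB : AEStronglyMeasurable
          (fun z => ‖F n z - g z‖ ^ 2 * μt z) (volume.restrict D)
      · have hdom : Integrable
            (fun z => 2 * (‖F n z‖ ^ 2 * μt z) + 2 * (‖g z‖ ^ 2 * μt z))
            (volume.restrict D) :=
          ((hF n).2.const_mul 2).add (hg.const_mul 2)
        have hBint : IntegrableOn (fun z => ‖F n z - g z‖ ^ 2 * μt z) D := by
          refine hdom.mono' hB ?_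
          filter_upwards [ae_restrict_mem hDm] with z hz
          have hμ0 : 0 ≤ μt z := (hμtpos z hz).le
          have h0 : 0 ≤ ‖F n z - g z‖ ^ 2 * μt z := mul_nonneg (sq_nonneg _) hμ0
          rw [Real.norm_eq_abs, abs_of_nonneg h0]
          have hn : ‖F n z - g z‖ ≤ ‖F n z‖ + ‖g z‖ := norm_sub_le _ _
          have h1 : ‖F n z - g z‖ ^ 2 ≤ (‖F n z‖ + ‖g z‖) ^ 2 :=
            pow_le_pow_left₀ (norm_nonneg _) hn 2
          have hsq : ‖F n z - g z‖ ^ 2 ≤ 2 * ‖F n z‖ ^ 2 + 2 * ‖g z‖ ^ 2 := by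
            nlinarith [sq_nonneg (‖F n z‖ - ‖g z‖), h1]
          nlinarith [mul_le_mul_of_nonneg_right hsq hμ0]
        exact (key _ hBint).2
      · rw [hzero _ hB]
        exact Real.sqrt_nonneg _
    have htend₁ : Tendsto (fun n => wnorm D μ₁ (fun z => F n z - g z)) atTop (nhds 0) :=
      squeeze_zero (fun n => Real.sqrt_nonneg _) hcomp htend
    obtain ⟨g', hg', hae⟩ := hμ₁closed F hF₁ g hg₁ htend₁
    refine ⟨g', ⟨hg'.1, ?_⟩, hae⟩
    refine hg.congr ?_
    filter_upwards [hae] with z hz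
    rw [hz]
  · -- the norm comparison with C = 1
    intro f hf
    rw [one_mul]
    exact (key f hf.2).2
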